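/- (Reduction to Weierstrass form, case α = 0, γ ≠ 0.) Let β, γ, c₁, c₂ ∈ ℝ and suppose u : ℝ → ℝ is differentiable and satisfies (u′(t))² = (γ/4)·u(t)⁴ + (β − γc₁)·u(t)² + γc₁² − 2βc₁ − 2c₂ for all t. Then the function x(t) := (γ/4)·u(t)² + (β − γc₁)/3 satisfies (x′(t))² = 4·x(t)³ − g₂·x(t) − g₃ for all t, where g₂ = (1/3)·[(β − γc₁)² + 3(β² + 2γc₂)] and g₃ = (1/27)·(β − γc₁)·[(β − γc₁)² − 9(β² + 2γc₂)]. -/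

import Mathlib

theorem stmt10 (β γ c₁ c₂ : ℝ) (u : ℝ → ℝ) (hu : Differentiable ℝ u)
    (hode : ∀ t : ℝ, (deriv u t) ^ 2
      = (γ / 4) * (u t) ^ 4 + (β - γ * c₁) * (u t) ^ 2 + γ * c₁ ^ 2 - 2 * β * c₁ - 2 * c₂) :
    ∀ t : ℝ,
      (deriv (fun s => (γ / 4) * (u s) ^ 2 + (β - γ * c₁) / 3) t) ^ 2
        = 4 * ((γ / 4) * (u t) ^ 2 + (β - γ * c₁) / 3) ^ 3
          - ((1 / 3) * ((β - γ * c₁) ^ 2 + 3 * (β ^ 2 + 2 * γ * c₂)))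
              * ((γ / 4) * (u t) ^ 2 + (β - γ * c₁) / 3)
          - (1 / 27) * (β - γ * c₁) * ((β - γ * c₁) ^ 2 - 9 * (β ^ 2 + 2 * γ * c₂)) := by
  intro t
  have hd : deriv (fun s => (γ / 4) * (u s) ^ 2 + (β - γ * c₁) / 3) t
      = (γ / 4) * (2 * u t * deriv u t) := by
    have h1 : HasDerivAt u (deriv u t) t := (hu t).hasDerivAt
    have h2 := (((h1.pow 2).const_mul (γ / 4)).add_const ((β - γ * c₁) / 3))
    rw [show (fun s => (γ / 4) * (u s) ^ 2 + (β - γ * c₁) / 3) = (fun x => γ / 4 * (u ^ 2) x + (β - γ * c₁) / 3) from rfl, h2.deriv]; push_cast; ring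
  rw [hd]
  linear_combination (γ ^ 2 / 4 * (u t) ^ 2) * hode t
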